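/- For every nonnegative integer n and every complex number z, B_n(z) + 2·∑_{k=1}^{⌊n/2⌋} C(n,2k) · B_{n-2k}(z)/3^{2k+1} = (1/3^n)·∑_{k=0}^{n} (-1)^{n-k} · C(n,k) · B_k(3z) = (1/3^n) · B_n(3z - 1), where C(n,k) denotes the binomial coefficient. -/

import Mathlib

open Finset

/-- The Bernoulli polynomial `B_n` evaluated at a complex number `z`,
with generating function `t·e^{zt}/(e^t−1) = ∑_{n≥0} B_n(z)·t^n/n!`. -/
noncomputable def bernoulliPoly (n : ℕ) (z : ℂ) : ℂ :=
  Polynomial.aeval z (Polynomial.bernoulli n)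

/-- The Euler polynomial `E_n` evaluated at a complex number `z`,
with generating function `2·e^{zt}/(e^t+1) = ∑_{n≥0} E_n(z)·t^n/n!`,
given by the explicit formula `E_n(z) = ∑_{k=0}^n 2^{-k} ∑_{j=0}^k (-1)^j C(k,j)(z+j)^n`. -/
noncomputable def eulerPoly (n : ℕ) (z : ℂ) : ℂ :=
  ∑ k ∈ range (n + 1), (1 / 2 ^ k : ℂ) *
    ∑ j ∈ range (k + 1), (-1) ^ j * (k.choose j : ℂ) * (z + j) ^ n

open Polynomial

lemma bernoulliPoly_eq (n : ℕ) (z : ℂ) :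
    bernoulliPoly n z = ∑ i ∈ range (n + 1),
      (algebraMap ℚ ℂ (_root_.bernoulli i)) * (n.choose i : ℂ) * z ^ (n - i) := by
  rw [bernoulliPoly, Polynomial.bernoulli, map_sum]
  refine sum_congr rfl fun i _ => ?_
  rw [aeval_monomial, map_mul]
  push_cast
  ring

lemma bernoulli_add (n : ℕ) (x y : ℂ) :
    bernoulliPoly n (x + y) = ∑ k ∈ range (n + 1),
      (n.choose k : ℂ) * bernoulliPoly k x * y ^ (n - k) := by
  have L : bernoulliPoly n (x + y) = ∑ i ∈ range (n + 1), ∑ j ∈ range (n - i + 1),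
      (algebraMap ℚ ℂ (_root_.bernoulli i)) * (n.choose i : ℂ) *
        (x ^ j * y ^ (n - i - j) * ((n - i).choose j : ℂ)) := by
    rw [bernoulliPoly_eq]
    refine sum_congr rfl fun i _ => ?_
    rw [add_pow, Finset.mul_sum]
  rw [L]
  have R : ∀ k ∈ range (n+1), (n.choose k : ℂ) * bernoulliPoly k x * y ^ (n - k)
      = ∑ i ∈ range (k + 1), (n.choose k : ℂ) *
        ((algebraMap ℚ ℂ (_root_.bernoulli i)) * (k.choose i : ℂ) * x ^ (k - i)) * y ^ (n - k) := by
    intro k _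
    rw [bernoulliPoly_eq, Finset.mul_sum, Finset.sum_mul]
  rw [Finset.sum_congr rfl R]
  rw [Finset.sum_sigma', Finset.sum_sigma']
  refine Finset.sum_nbij' (fun p => ⟨p.1 + p.2, p.1⟩) (fun p => ⟨p.2, p.1 - p.2⟩)
    ?_ ?_ ?_ ?_ ?_
  · rintro ⟨i, j⟩ h
    simp only [mem_sigma, mem_range] at h ⊢
    omega
  · rintro ⟨k, i⟩ h
    simp only [mem_sigma, mem_range] at h ⊢
    omega
  · rintro ⟨i, j⟩ h; simp
  · rintro ⟨k, i⟩ h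
    simp only [mem_sigma, mem_range] at h
    have : i + (k - i) = k := by omega
    simp [this]
  · rintro ⟨i, j⟩ h
    simp only [mem_sigma, mem_range] at h
    have h1 : i ≤ i + j := Nat.le_add_right i j
    have h2 : i + j ≤ n := by omega
    have hc : n.choose (i+j) * (i+j).choose i = n.choose i * (n - i).choose j := by
      rw [Nat.choose_mul h1, Nat.add_sub_cancel_left]
    have hc' : (n.choose (i+j) : ℂ) * ((i+j).choose i : ℂ)
        = (n.choose i : ℂ) * ((n - i).choose j : ℂ) := by exact_mod_cast congrArg Nat.cast hc
    simp only [Nat.add_sub_cancel_left]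
    rw [show n - i - j = n - (i + j) by omega]
    calc (algebraMap ℚ ℂ) (_root_.bernoulli i) * (n.choose i : ℂ) *
          (x ^ j * y ^ (n - (i+j)) * ((n - i).choose j : ℂ))
        = ((n.choose i : ℂ) * ((n-i).choose j : ℂ)) *
          ((algebraMap ℚ ℂ) (_root_.bernoulli i) * (x ^ j * y ^ (n - (i+j)))) := by ring
      _ = ((n.choose (i+j) : ℂ) * ((i+j).choose i : ℂ)) *
          ((algebraMap ℚ ℂ) (_root_.bernoulli i) * (x ^ j * y ^ (n - (i+j)))) := by rw [hc']
      _ = (n.choose (i + j) : ℂ) *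
          ((algebraMap ℚ ℂ) (_root_.bernoulli i) * ((i+j).choose i : ℂ) * x ^ j) *
            y ^ (n - (i + j)) := by ring

lemma bshift (m : ℕ) : (Polynomial.bernoulli (m+1)).comp (X + C 1)
    = Polynomial.bernoulli (m+1) + C ((m:ℚ)+1) * X ^ m := by
  apply Polynomial.funext
  intro r
  rw [eval_comp]
  simp only [eval_add, eval_mul, eval_pow, eval_X, eval_C, eval_one]
  rw [show r + 1 = 1 + r by ring, Polynomial.bernoulli_eval_one_add]
  push_cast
  ring_nf

lemma const_of_shift (p : ℚ[X]) (h : p.comp (X + C (1/3)) = p) : p = C (p.eval 0) := by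
  have he : ∀ x : ℚ, p.eval (x + 1/3) = p.eval x := by
    intro x
    conv_rhs => rw [← h]
    rw [eval_comp]; simp
  have hk : ∀ k : ℕ, p.eval ((k : ℚ) / 3) = p.eval 0 := by
    intro k
    induction k with
    | zero => norm_num
    | succ k ih => rw [show ((k+1 : ℕ) : ℚ)/3 = (k:ℚ)/3 + 1/3 by push_cast; ring, he, ih]
  apply Polynomial.eq_of_infinite_eval_eq
  refine Set.infinite_of_injective_forall_mem (f := fun k : ℕ => (k : ℚ) / 3) ?_ ?_
  · intro a b hab
    field_simp at hab
    exact_mod_cast hab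
  · intro k
    simp only [Set.mem_setOf_eq, eval_C]
    exact hk k

lemma mult3 (n : ℕ) : C (3:ℚ) * (Polynomial.bernoulli n).comp (C 3 * X) =
    C ((3:ℚ)^n) * (Polynomial.bernoulli n + (Polynomial.bernoulli n).comp (X + C (1/3))
      + (Polynomial.bernoulli n).comp (X + C (2/3))) := by
  set B := Polynomial.bernoulli (n+1) with hB
  set T := B.comp (C 3 * X) - C ((3:ℚ)^n) *
    (B + B.comp (X + C (1/3)) + B.comp (X + C (2/3))) with hT
  have step1 : T.comp (X + C (1/3)) = T := by
    rw [hT, sub_comp, mul_comp, C_comp, add_comp, add_comp, comp_assoc, comp_assoc, comp_assoc]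
    have e1 : (C (3:ℚ) * X).comp (X + C (1/3)) = (X + C (1:ℚ)).comp (C 3 * X) := by
      simp only [mul_comp, add_comp, X_comp, C_comp]
      rw [mul_add, ← C_mul]; norm_num
    have e2 : (X + C (1/3 : ℚ)).comp (X + C (1/3)) = X + C (2/3) := by
      simp only [add_comp, X_comp, C_comp]
      rw [add_assoc, ← C_add]; norm_num
    have e3 : (X + C (2/3 : ℚ)).comp (X + C (1/3)) = X + C (1:ℚ) := by
      simp only [add_comp, X_comp, C_comp]
      rw [add_assoc, ← C_add]; norm_num
    rw [e1, e2, e3, ← comp_assoc, bshift n, add_comp, mul_comp, pow_comp, C_comp, X_comp,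
      ← hB, mul_pow, ← C_pow]
    ring
  have hconst : T = C (T.eval 0) := const_of_shift T step1
  have hder : Polynomial.derivative T = 0 := by rw [hconst, derivative_C]
  have hderT : Polynomial.derivative T = C ((n:ℚ)+1) *
      (C (3:ℚ) * (Polynomial.bernoulli n).comp (C 3 * X) -
       C ((3:ℚ)^n) * (Polynomial.bernoulli n + (Polynomial.bernoulli n).comp (X + C (1/3))
        + (Polynomial.bernoulli n).comp (X + C (2/3)))) := by
    rw [hT, derivative_sub, derivative_mul, derivative_C, derivative_add, derivative_add,
      derivative_comp, derivative_comp, derivative_comp, hB,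
      Polynomial.derivative_bernoulli_add_one]
    simp only [derivative_mul, derivative_C, derivative_X, derivative_add, derivative_one,
      zero_mul, mul_one, zero_add, add_zero, mul_comp, add_comp, natCast_comp, one_comp,
      map_add, map_one, Polynomial.C_eq_natCast]
    ring
  have hne : (C ((n:ℚ)+1)) ≠ 0 := by
    simp only [ne_eq, C_eq_zero]
    positivity
  have := hderT.symm.trans hder
  rcases mul_eq_zero.mp this with h | h
  · exact absurd h hne
  · linear_combination h

lemma mult3C (n : ℕ) (z : ℂ) : 3 * bernoulliPoly n (3 * z) =
    3 ^ n * (bernoulliPoly n z + bernoulliPoly n (z + 1/3) + bernoulliPoly n (z + 2/3)) := by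
  have h := congrArg (Polynomial.aeval z) (mult3 n)
  simp only [map_mul, map_add, aeval_C, aeval_comp, aeval_X, map_pow, map_ofNat] at h
  have e13 : (algebraMap ℚ ℂ) (1/3:ℚ) = 1/3 := by push_cast [algebraMap.coe_div]; norm_num
  have e23 : (algebraMap ℚ ℂ) (2/3:ℚ) = 2/3 := by push_cast [algebraMap.coe_div]; norm_num
  rw [e13, e23] at h
  simpa [bernoulliPoly, show (2/3 : ℂ) = 2/3 from rfl] using h

lemma even_sum (n : ℕ) (z : ℂ) :
    bernoulliPoly n (z + 1/3) + bernoulliPoly n (z - 1/3) =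
      ∑ j ∈ range (n / 2 + 1), 2 * (n.choose (2*j) : ℂ) *
        bernoulliPoly (n - 2*j) z * (1/3 : ℂ) ^ (2*j) := by
  have hz : z - 1/3 = z + (-(1/3) : ℂ) := by ring
  rw [hz, bernoulli_add, bernoulli_add, ← Finset.sum_add_distrib]
  have h1 : ∀ k ∈ range (n+1),
      (n.choose k : ℂ) * bernoulliPoly k z * (1/3:ℂ)^(n-k)
        + (n.choose k : ℂ) * bernoulliPoly k z * (-(1/3):ℂ)^(n-k)
      = (n.choose k : ℂ) * bernoulliPoly k z * ((1/3:ℂ)^(n-k) + (-(1/3):ℂ)^(n-k)) := by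
    intro k _; ring
  rw [Finset.sum_congr rfl h1]
  rw [← Finset.sum_filter_of_ne (p := fun k => Even (n - k))
    (fun k _ h => by
      by_contra hodd
      apply h
      rw [Odd.neg_pow (Nat.not_even_iff_odd.mp hodd)]
      ring)]
  refine Finset.sum_nbij' (fun k => (n - k) / 2) (fun j => n - 2 * j) ?_ ?_ ?_ ?_ ?_
  · intro k hk
    simp only [mem_filter, mem_range] at hk ⊢
    omega
  · intro j hj
    simp only [mem_filter, mem_range] at hj ⊢
    constructor
    · omega
    · exact ⟨j, by omega⟩
  · intro k hk
    simp only [mem_filter, mem_range] at hk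
    obtain ⟨hk1, m, hm⟩ := hk
    show n - 2 * ((n - k) / 2) = k
    omega
  · intro j hj
    simp only [mem_range] at hj
    show (n - (n - 2 * j)) / 2 = j
    omega
  · intro k hk
    simp only [mem_filter, mem_range] at hk
    obtain ⟨hk1, hev⟩ := hk
    obtain ⟨m, hm⟩ := hev
    have h2 : 2 * ((n - k) / 2) = n - k := by omega
    have hkn : k ≤ n := by omega
    rw [h2, Nat.choose_symm hkn, show n - (n - k) = k by omega]
    rw [Even.neg_pow ⟨m, hm⟩]
    ring

theorem stmt3 (n : ℕ) (z : ℂ) :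
    (bernoulliPoly n z + 2 * ∑ k ∈ Icc 1 (n / 2), (n.choose (2 * k) : ℂ) *
        bernoulliPoly (n - 2 * k) z / 3 ^ (2 * k + 1)
      = (1 / 3 ^ n : ℂ) * ∑ k ∈ range (n + 1), (-1 : ℂ) ^ (n - k) *
        (n.choose k : ℂ) * bernoulliPoly k (3 * z)) ∧
    ((1 / 3 ^ n : ℂ) * ∑ k ∈ range (n + 1), (-1 : ℂ) ^ (n - k) *
        (n.choose k : ℂ) * bernoulliPoly k (3 * z)
      = (1 / 3 ^ n : ℂ) * bernoulliPoly n (3 * z - 1)) := by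
  have alt : ∑ k ∈ range (n + 1), (-1 : ℂ) ^ (n - k) *
      (n.choose k : ℂ) * bernoulliPoly k (3 * z) = bernoulliPoly n (3 * z - 1) := by
    have h := bernoulli_add n (3 * z) (-1)
    rw [show (3 * z + (-1) : ℂ) = 3 * z - 1 by ring] at h
    rw [h]
    exact Finset.sum_congr rfl fun k _ => by ring
  have part1 : bernoulliPoly n z + 2 * ∑ k ∈ Icc 1 (n / 2), (n.choose (2 * k) : ℂ) *
      bernoulliPoly (n - 2 * k) z / 3 ^ (2 * k + 1)
      = (1 / 3 ^ n : ℂ) * bernoulliPoly n (3 * z - 1) := by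
    have hm := mult3C n (z - 1/3)
    rw [show 3 * (z - 1/3) = 3 * z - 1 by ring, show z - 1/3 + 1/3 = z by ring,
      show z - 1/3 + 2/3 = z + 1/3 by ring] at hm
    have he := even_sum n z
    have hsplit : range (n / 2 + 1) = insert 0 (Icc 1 (n / 2)) := by
      ext x; simp [Finset.mem_Icc]; omega
    rw [hsplit, Finset.sum_insert (by simp)] at he
    norm_num at he
    have hsum : (3:ℂ) * 3 ^ n * (2 * ∑ k ∈ Icc 1 (n / 2), (n.choose (2 * k) : ℂ) *
        bernoulliPoly (n - 2 * k) z / 3 ^ (2 * k + 1))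
        = 3 ^ n * ∑ j ∈ Icc 1 (n / 2), 2 * (n.choose (2*j) : ℂ) *
          bernoulliPoly (n - 2*j) z * (1/3 : ℂ) ^ (2*j) := by
      simp only [Finset.mul_sum]
      refine Finset.sum_congr rfl fun k _ => ?_
      rw [pow_succ]
      have h9 : ((3:ℂ) ^ (2*k)) ≠ 0 := pow_ne_zero _ (by norm_num)
      field_simp
      rw [mul_assoc _ ((3:ℂ)^(2*k)), ← mul_pow]; norm_num
    have h3n : (3:ℂ) * 3 ^ n ≠ 0 := mul_ne_zero (by norm_num) (pow_ne_zero _ (by norm_num))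
    apply mul_left_cancel₀ h3n
    rw [show (3:ℂ) * 3 ^ n * ((1 / 3 ^ n : ℂ) * bernoulliPoly n (3 * z - 1))
      = 3 * bernoulliPoly n (3 * z - 1) by field_simp, hm]
    linear_combination hsum - (3:ℂ) ^ n * he
  exact ⟨by rw [part1, alt], by rw [alt]⟩
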